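/- P(ℚ) is the disjoint union of B(ℚ) and the cosets B(ℚ)·γ_δ for δ ∈ ℚ, where γ_δ = [[β_δ, 0],[0, β_δ⁻ᵀ]] (block diagonal) and β_δ = [[0,1],[−1,0]]·[[1,δ],[0,1]]. That is: every p ∈ P(ℚ) lies in exactly one of these cosets, and for δ ≠ δ′ the cosets B(ℚ)γ_δ and B(ℚ)γ_{δ′} are disjoint. -/

import Mathlib

/-! STATEMENT 6: P(ℚ) is the disjoint union of B(ℚ) and the cosets B(ℚ)·γ_δ, δ ∈ ℚ,
where γ_δ = diag-block(β_δ, β_δ⁻ᵀ) and β_δ = [[0,1],[−1,0]]·[[1,δ],[0,1]]. -/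
open Matrix

noncomputable section

/-- The 4×4 matrix with 2×2 blocks `[[A, B], [C, D]]`. -/
def blk {R : Type*} (A B C D : Matrix (Fin 2) (Fin 2) R) : Matrix (Fin 4) (Fin 4) R :=
  !![A 0 0, A 0 1, B 0 0, B 0 1;
     A 1 0, A 1 1, B 1 0, B 1 1;
     C 0 0, C 0 1, D 0 0, D 0 1;
     C 1 0, C 1 1, D 1 0, D 1 1]

/-- `J₂ = [[0, I₂], [−I₂, 0]] ∈ M₄(ℚ)`. -/
def J2 : Matrix (Fin 4) (Fin 4) ℚ := blk 0 1 (-1) 0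

/-- Membership in `GSp₄(ℚ) = {g ∈ GL₄(ℚ) : gᵀ J₂ g = ν(g) J₂, ν(g) ∈ ℚˣ}`. -/
def IsGSp4 (g : Matrix (Fin 4) (Fin 4) ℚ) : Prop :=
  IsUnit g ∧ ∃ ν : ℚ, ν ≠ 0 ∧ gᵀ * J2 * g = ν • J2

/-- The Weyl representatives `w₁ = I₄`, `w₂`, `w₃`, `w₄`. -/
def w1 : Matrix (Fin 4) (Fin 4) ℚ := 1

def w2 : Matrix (Fin 4) (Fin 4) ℚ :=
  !![0, 0, 1, 0;
     0, 1, 0, 0;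
     -1, 0, 0, 0;
     0, 0, 0, 1]

def w3 : Matrix (Fin 4) (Fin 4) ℚ :=
  !![1, 0, 0, 0;
     0, 0, 0, 1;
     0, 0, 1, 0;
     0, -1, 0, 0]

def w4 : Matrix (Fin 4) (Fin 4) ℚ :=
  !![0, 0, 1, 0;
     0, 0, 0, 1;
     1, 0, 0, 0;
     0, 1, 0, 0]

/-- Membership in the Siegel parabolic subgroup `P(ℚ)`: elements of `GSp₄(ℚ)` whose lower-left
2×2 block vanishes. -/
def memP (g : Matrix (Fin 4) (Fin 4) ℚ) : Prop :=
  IsGSp4 g ∧ g 2 0 = 0 ∧ g 2 1 = 0 ∧ g 3 0 = 0 ∧ g 3 1 = 0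

/-- Membership in the Borel subgroup `B(ℚ)`: elements `g ∈ GSp₄(ℚ)` with
`g₂₁ = g₃₁ = g₃₂ = g₃₄ = g₄₁ = g₄₂ = 0` (1-indexed entries). -/
def memB (g : Matrix (Fin 4) (Fin 4) ℚ) : Prop :=
  IsGSp4 g ∧ g 1 0 = 0 ∧ g 2 0 = 0 ∧ g 2 1 = 0 ∧ g 2 3 = 0 ∧ g 3 0 = 0 ∧ g 3 1 = 0

/-- `β_δ = [[0,1],[−1,0]]·[[1,δ],[0,1]] = [[0,1],[−1,−δ]]`. -/
def betaMat (δ : ℚ) : Matrix (Fin 2) (Fin 2) ℚ := !![0, 1; -1, 0] * !![1, δ; 0, 1]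

/-- `γ_δ = [[β_δ, 0],[0, β_δ⁻ᵀ]]`. -/
def gammaMat (δ : ℚ) : Matrix (Fin 4) (Fin 4) ℚ :=
  blk (betaMat δ) 0 0 ((betaMat δ)⁻¹)ᵀ

lemma betaMat_eq (δ : ℚ) : betaMat δ = !![0, 1; -1, -δ] := by
  ext i j; fin_cases i <;> fin_cases j <;>
    simp [betaMat, Matrix.mul_apply, Fin.sum_univ_two]
lemma betaMat_inv (δ : ℚ) : (betaMat δ)⁻¹ = !![-δ, -1; 1, 0] := by
  apply Matrix.inv_eq_right_inv
  rw [betaMat_eq]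
  ext i j; fin_cases i <;> fin_cases j <;>
    simp [Matrix.mul_apply, Fin.sum_univ_two]
lemma gammaMat_eq (δ : ℚ) :
    gammaMat δ = !![0,1,0,0; -1,-δ,0,0; 0,0,-δ,1; 0,0,-1,0] := by
  rw [gammaMat, betaMat_inv, betaMat_eq]
  ext i j; fin_cases i <;> fin_cases j <;>
    simp [blk, Matrix.vecHead, Matrix.vecTail, Matrix.transpose_apply]
def gammaInv (δ : ℚ) : Matrix (Fin 4) (Fin 4) ℚ :=
  !![-δ,-1,0,0; 1,0,0,0; 0,0,0,-1; 0,0,1,-δ]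
lemma gamma_mul_inv (δ : ℚ) : gammaMat δ * gammaInv δ = 1 := by
  rw [gammaMat_eq]
  ext i j; fin_cases i <;> fin_cases j <;>
    simp [gammaInv, Matrix.mul_apply, Fin.sum_univ_four, Matrix.one_apply,
      Matrix.vecHead, Matrix.vecTail]
lemma inv_mul_gamma (δ : ℚ) : gammaInv δ * gammaMat δ = 1 := by
  rw [gammaMat_eq]
  ext i j; fin_cases i <;> fin_cases j <;>
    simp [gammaInv, Matrix.mul_apply, Fin.sum_univ_four, Matrix.one_apply,
      Matrix.vecHead, Matrix.vecTail]
lemma gammaInv_sympl (δ : ℚ) : (gammaInv δ)ᵀ * J2 * (gammaInv δ) = J2 := by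
  ext i j; fin_cases i <;> fin_cases j <;>
    simp [gammaInv, J2, blk, Matrix.mul_apply, Fin.sum_univ_four,
      Matrix.vecHead, Matrix.vecTail]
lemma entry_rel {g : Matrix (Fin 4) (Fin 4) ℚ} {ν : ℚ}
    (h : gᵀ * J2 * g = ν • J2) (i j : Fin 4) :
    g 0 i * g 2 j + g 1 i * g 3 j - g 2 i * g 0 j - g 3 i * g 1 j = ν * J2 i j := by
  have := congrFun (congrFun h i) j
  simp [Matrix.mul_apply, Fin.sum_univ_four, Matrix.smul_apply, J2, blk,
    Matrix.vecHead, Matrix.vecTail] at this ⊢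
  linarith
lemma memB_11_ne {b : Matrix (Fin 4) (Fin 4) ℚ} (hb : memB b) : b 1 1 ≠ 0 := by
  obtain ⟨⟨hu, ν, hν, hJ⟩, h10, h20, h21, h23, h30, h31⟩ := hb
  have e := entry_rel hJ 1 3
  simp [h23, h21, h31, J2, blk, Matrix.vecHead, Matrix.vecTail] at e
  intro h
  rw [h] at e
  simp at e
  exact hν e.symm


theorem stmt6 :
    -- every p ∈ P(ℚ) lies in B(ℚ) or in some B(ℚ)·γ_δ
    (∀ p : Matrix (Fin 4) (Fin 4) ℚ, memP p →
      memB p ∨ ∃ (δ : ℚ) (b : Matrix (Fin 4) (Fin 4) ℚ), memB b ∧ p = b * gammaMat δ) ∧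
    -- B(ℚ) is disjoint from every coset B(ℚ)·γ_δ
    (∀ (δ : ℚ) (b b' : Matrix (Fin 4) (Fin 4) ℚ), memB b → memB b' → b ≠ b' * gammaMat δ) ∧
    -- for δ ≠ δ′ the cosets B(ℚ)·γ_δ and B(ℚ)·γ_δ′ are disjoint
    (∀ δ δ' : ℚ, δ ≠ δ' → ∀ b b' : Matrix (Fin 4) (Fin 4) ℚ, memB b → memB b' →
      b * gammaMat δ ≠ b' * gammaMat δ') := by
  refine ⟨?_, ?_, ?_⟩
  · -- Part 1
    intro p hp
    obtain ⟨⟨hu, ν, hν, hJ⟩, h20, h21, h30, h31⟩ := hp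
    have e1 := entry_rel hJ 0 2
    have e2 := entry_rel hJ 0 3
    have e3 := entry_rel hJ 1 2
    have e4 := entry_rel hJ 1 3
    simp [h20, h21, h30, h31, J2, blk, Matrix.vecHead, Matrix.vecTail] at e1 e2 e3 e4
    by_cases hc : p 1 0 = 0
    · left
      rw [hc] at e1 e2
      simp at e1 e2
      have hp00 : p 0 0 ≠ 0 := by
        intro h0; rw [h0] at e1; simp at e1; exact hν e1.symm
      have h23 : p 2 3 = 0 := e2.resolve_left hp00
      exact ⟨⟨hu, ν, hν, hJ⟩, hc, h20, h21, h23, h30, h31⟩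
    · right
      -- derive D * Aᵀ = ν • 1, entry (0,1): p22*p10 + p23*p11 = 0
      set A : Matrix (Fin 2) (Fin 2) ℚ := !![p 0 0, p 0 1; p 1 0, p 1 1] with hA
      set D : Matrix (Fin 2) (Fin 2) ℚ := !![p 2 2, p 2 3; p 3 2, p 3 3] with hD
      have hAD : Aᵀ * D = ν • (1 : Matrix (Fin 2) (Fin 2) ℚ) := by
        ext i j; fin_cases i <;> fin_cases j <;>
          simp [hA, hD, Matrix.mul_apply, Fin.sum_univ_two, Matrix.one_apply,
            Matrix.vecHead, Matrix.vecTail] <;> linarith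
      have h1 : (ν⁻¹ • Aᵀ) * D = 1 := by
        rw [Matrix.smul_mul, hAD, smul_smul, inv_mul_cancel₀ hν, one_smul]
      have h2 : D * (ν⁻¹ • Aᵀ) = 1 := mul_eq_one_comm.mp h1
      rw [Matrix.mul_smul] at h2
      have h3 : D * Aᵀ = ν • (1 : Matrix (Fin 2) (Fin 2) ℚ) := by
        have := congrArg (fun M => ν • M) h2
        simpa [smul_smul, mul_inv_cancel₀ hν] using this
      have hDA : p 2 2 * p 1 0 + p 2 3 * p 1 1 = 0 := by
        have := congrFun (congrFun h3 0) 1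
        simpa [hA, hD, Matrix.mul_apply, Fin.sum_univ_two, Matrix.one_apply,
          Matrix.vecHead, Matrix.vecTail] using this
      set δ : ℚ := p 1 1 / p 1 0 with hδ
      refine ⟨δ, p * gammaInv δ, ⟨⟨?_, ν, hν, ?_⟩, ?_, ?_, ?_, ?_, ?_, ?_⟩, ?_⟩
      · exact hu.mul ⟨⟨gammaInv δ, gammaMat δ, inv_mul_gamma δ, gamma_mul_inv δ⟩, rfl⟩
      · rw [Matrix.transpose_mul]
        calc (gammaInv δ)ᵀ * pᵀ * J2 * (p * gammaInv δ)
            = (gammaInv δ)ᵀ * (pᵀ * J2 * p) * gammaInv δ := by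
              simp only [Matrix.mul_assoc]
          _ = (gammaInv δ)ᵀ * (ν • J2) * gammaInv δ := by rw [hJ]
          _ = ν • ((gammaInv δ)ᵀ * J2 * gammaInv δ) := by
              rw [Matrix.mul_smul, Matrix.smul_mul]
          _ = ν • J2 := by rw [gammaInv_sympl]
      · -- (p * gammaInv δ) 1 0 = 0
        simp [gammaInv, Matrix.mul_apply, Fin.sum_univ_four,
          Matrix.vecHead, Matrix.vecTail, hδ]
        field_simp
        ring
      · simp [gammaInv, Matrix.mul_apply, Fin.sum_univ_four,
          Matrix.vecHead, Matrix.vecTail, h20, h21]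
      · simp [gammaInv, Matrix.mul_apply, Fin.sum_univ_four,
          Matrix.vecHead, Matrix.vecTail, h20]
      · -- (p * gammaInv δ) 2 3 = 0
        simp [gammaInv, Matrix.mul_apply, Fin.sum_univ_four,
          Matrix.vecHead, Matrix.vecTail, hδ]
        field_simp
        linarith [hDA]
      · simp [gammaInv, Matrix.mul_apply, Fin.sum_univ_four,
          Matrix.vecHead, Matrix.vecTail, h30, h31]
      · simp [gammaInv, Matrix.mul_apply, Fin.sum_univ_four,
          Matrix.vecHead, Matrix.vecTail, h30]
      · rw [Matrix.mul_assoc, inv_mul_gamma, Matrix.mul_one]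
  · -- Part 2
    intro δ b b' hb hb' h
    have h11 := memB_11_ne hb'
    have e := congrFun (congrFun h 1) 0
    rw [gammaMat_eq] at e
    simp [Matrix.mul_apply, Fin.sum_univ_four, hb.2.1,
      Matrix.vecHead, Matrix.vecTail] at e
    exact h11 (by linarith)
  · -- Part 3
    intro δ δ' hδδ b b' hb hb' h
    have h11 := memB_11_ne hb
    have e0 := congrFun (congrFun h 1) 0
    have e1 := congrFun (congrFun h 1) 1
    rw [gammaMat_eq δ, gammaMat_eq δ'] at e0 e1
    simp [Matrix.mul_apply, Fin.sum_univ_four, hb.2.1, hb'.2.1,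
      Matrix.vecHead, Matrix.vecTail] at e0 e1
    apply hδδ
    apply mul_right_cancel₀ h11
    linear_combination e1 - δ' * e0

end
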